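/- Every automorphism of the one-sided full 2-shift is either the identity or the symbol interchange: if h : Σ₂⁺ → Σ₂⁺ is a homeomorphism satisfying h ∘ σ = σ ∘ h, then either h is the identity map or h is the map defined by h(x)_n = 1 − x_n for all n. In particular, the automorphism group of the one-sided full 2-shift is cyclic of order two. -/

import Mathlib

/-- The one-sided full 2-shift space: one-sided sequences over the field `𝔽₂`, with
the product topology (each factor discrete). -/
abbrev Sigma2Plus : Type := ℕ → ZMod 2

/-- The one-sided shift map `σ`: `(σ x) n = x (n+1)`. -/
def shiftMap (x : Sigma2Plus) : Sigma2Plus := fun n => x (n + 1)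

/-- Prepend a symbol to a sequence. -/
def consSeq (a : ZMod 2) (t : Sigma2Plus) : Sigma2Plus := fun n => Nat.casesOn n a t

lemma consSeq_succ (a : ZMod 2) (t : Sigma2Plus) (n : ℕ) : consSeq a t (n + 1) = t n := rfl

lemma consSeq_self (x : Sigma2Plus) : consSeq (x 0) (shiftMap x) = x := by
  funext n; cases n <;> rfl

/-- `c` depends only on the first `n` coordinates. -/
def DependsOnFirst (c : Sigma2Plus → ZMod 2) (n : ℕ) : Prop :=
  ∀ x y : Sigma2Plus, (∀ i < n, x i = y i) → c x = c y

/-- A continuous function on the shift space depends on finitely many coordinates. -/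
lemma exists_dependsOn (φ : Sigma2Plus → ZMod 2) (hφ : Continuous φ) :
    ∃ N, DependsOnFirst φ N := by
  have key : ∀ x : Sigma2Plus, ∃ I : Finset ℕ,
      ∀ y : Sigma2Plus, (∀ i ∈ I, y i = x i) → φ y = φ x := by
    intro x
    have hopen : IsOpen (φ ⁻¹' {φ x}) := (isOpen_discrete _).preimage hφ
    obtain ⟨I, u, hIu, hsub⟩ := isOpen_pi_iff.mp hopen x rfl
    refine ⟨I, fun y hy => hsub fun i hi => ?_⟩
    rw [hy i hi]; exact (hIu i hi).2
  choose I hI using key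
  have hUopen : ∀ x : Sigma2Plus, IsOpen {y : Sigma2Plus | ∀ i ∈ I x, y i = x i} := by
    intro x
    have : {y : Sigma2Plus | ∀ i ∈ I x, y i = x i}
        = Set.pi (I x : Set ℕ) (fun i => {x i}) := by
      ext y; simp [Set.mem_pi]
    rw [this]
    exact isOpen_set_pi (I x).finite_toSet (fun i _ => isOpen_discrete _)
  have hcover : (Set.univ : Set Sigma2Plus) ⊆
      ⋃ x, {y : Sigma2Plus | ∀ i ∈ I x, y i = x i} :=
    fun y _ => Set.mem_iUnion.mpr ⟨y, fun i _ => rfl⟩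
  obtain ⟨T, hT⟩ := isCompact_univ.elim_finite_subcover _ hUopen hcover
  refine ⟨(T.sup fun x => (I x).sup id) + 1, ?_⟩
  intro x y hxy
  have hx : x ∈ ⋃ x₀ ∈ T, {y : Sigma2Plus | ∀ i ∈ I x₀, y i = x₀ i} := hT (Set.mem_univ x)
  simp only [Set.mem_iUnion, Set.mem_setOf_eq] at hx
  obtain ⟨x₀, hx₀T, hx₀⟩ := hx
  have hyU : ∀ i ∈ I x₀, y i = x₀ i := by
    intro i hi
    have h1 : i ≤ (I x₀).sup id := Finset.le_sup (f := id) hi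
    have h2 : (I x₀).sup id ≤ T.sup fun x => (I x).sup id :=
      Finset.le_sup (f := fun x => (I x).sup id) hx₀T
    rw [← hxy i (by omega)]
    exact hx₀ i hi
  calc φ x = φ x₀ := hI x₀ x hx₀
    _ = φ y := (hI x₀ y hyU).symm

/-- Any injective continuous shift-commuting map has the left-permutive local form. -/
lemma rule_exists (f : Sigma2Plus → Sigma2Plus) (hcont : Continuous f)
    (hinj : Function.Injective f) (hcomm : ∀ x, f (shiftMap x) = shiftMap (f x)) :
    ∃ c : Sigma2Plus → ZMod 2,
      (∀ x n, f x n = x n + c (fun j => x (j + n + 1))) ∧ ∃ N, DependsOnFirst c N := by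
  have hφcont : Continuous (fun x => f x 0) := (continuous_apply 0).comp hcont
  have hiter : ∀ (n : ℕ) (x : Sigma2Plus), f x n = f (fun j => x (j + n)) 0 := by
    intro n
    induction n with
    | zero => intro x; rfl
    | succ n ih =>
      intro x
      have h1 : f x (n + 1) = shiftMap (f x) n := rfl
      rw [h1, ← hcomm x, ih (shiftMap x)]
      congr 1
  have hneq : ∀ t : Sigma2Plus, f (consSeq 1 t) 0 = 1 + f (consSeq 0 t) 0 := by
    intro t
    by_contra hne
    have heq : f (consSeq 0 t) = f (consSeq 1 t) := by
      funext n
      cases n with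
      | zero => exact (by decide : ∀ a b : ZMod 2, ¬(a = 1 + b) → b = a) _ _ hne
      | succ n =>
        rw [hiter (n+1) (consSeq 0 t), hiter (n+1) (consSeq 1 t)]
        rfl
    have := hinj heq
    have h0 : (0 : ZMod 2) = 1 := congrFun this 0
    exact absurd h0 (by decide)
  refine ⟨fun t => f (consSeq 0 t) 0, ?_, ?_⟩
  · intro x n
    rw [hiter n x]
    have hzc : (fun j => x (j + n)) = consSeq (x n) (fun j => x (j + n + 1)) := by
      funext j
      cases j with
      | zero => show x (0 + n) = x n; congr 1; omega
      | succ j => show x (j + 1 + n) = x (j + n + 1); congr 1; omega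
    rcases (by decide : ∀ a : ZMod 2, a = 0 ∨ a = 1) (x n) with h0 | h1
    · rw [hzc, h0, zero_add]
    · rw [hzc, h1, hneq]
  · obtain ⟨N, hN⟩ := exists_dependsOn _ hφcont
    refine ⟨N, fun t t' h => hN (consSeq 0 t) (consSeq 0 t') ?_⟩
    intro i hi
    cases i with
    | zero => rfl
    | succ i => exact h i (by omega)

open Classical in
/-- Extraction of a sensitive coordinate at the minimal width. -/
lemma sensitivity (c : Sigma2Plus → ZMod 2) (hex : ∃ n, DependsOnFirst c n)
    (hne : Nat.find hex ≠ 0) :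
    ∃ t s : Sigma2Plus, (∀ i, i ≠ Nat.find hex - 1 → t i = s i) ∧ c t ≠ c s := by
  have hKm : ¬ DependsOnFirst c (Nat.find hex - 1) := Nat.find_min hex (by omega)
  rw [DependsOnFirst] at hKm
  push_neg at hKm
  obtain ⟨t, t', hag, hcne⟩ := hKm
  refine ⟨t, (fun i => if i = Nat.find hex - 1 then t' i else t i), ?_, ?_⟩
  · intro i hi; simp [hi]
  · have h2 : c (fun i => if i = Nat.find hex - 1 then t' i else t i) = c t' := by
      apply Nat.find_spec hex
      intro i hi
      by_cases hieq : i = Nat.find hex - 1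
      · simp [hieq]
      · simpa [hieq] using hag i (by omega)
    rw [h2]; exact hcne

/-- Downward steering recursion. -/
def steer (c : Sigma2Plus → ZMod 2) (u t : Sigma2Plus) (l : ℕ) (i : ℕ) : ZMod 2 :=
  if l ≤ i then t (i - l)
  else if i = l - 1 then 0
  else u i + c (fun j => steer c u t l (j + i + 1))
termination_by l - i
decreasing_by omega

lemma steer_ge (c : Sigma2Plus → ZMod 2) (u t : Sigma2Plus) (l i : ℕ) (h : l ≤ i) :
    steer c u t l i = t (i - l) := by
  rw [steer, if_pos h]

lemma steer_top (c : Sigma2Plus → ZMod 2) (u t : Sigma2Plus) (l : ℕ) (hl : l ≠ 0) :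
    steer c u t l (l - 1) = 0 := by
  rw [steer, if_neg (by omega), if_pos rfl]

lemma steer_lt (c : Sigma2Plus → ZMod 2) (u t : Sigma2Plus) (l i : ℕ) (h : i < l - 1) :
    steer c u t l i = u i + c (fun j => steer c u t l (j + i + 1)) := by
  rw [steer, if_neg (by omega), if_neg (by omega)]

theorem part_one (h : Sigma2Plus ≃ₜ Sigma2Plus)
    (hcomm : ∀ x, h (shiftMap x) = shiftMap (h x)) :
    (∀ x, h x = x) ∨ (∀ x n, h x n = 1 - x n) := by
  classical
  obtain ⟨c, hrule, hNc⟩ := rule_exists h h.continuous h.injective hcomm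
  have hcomm' : ∀ x, h.symm (shiftMap x) = shiftMap (h.symm x) := by
    intro x
    apply h.injective
    rw [h.apply_symm_apply, hcomm, h.apply_symm_apply]
  obtain ⟨c', hrule', hNc'⟩ :=
    rule_exists h.symm h.symm.continuous h.symm.injective hcomm'
  have spade : ∀ z : Sigma2Plus, c z = c' (h z) := by
    intro z
    have e2 : consSeq 0 z 0 = h.symm (h (consSeq 0 z)) 0 := by
      rw [h.symm_apply_apply]
    rw [hrule' (h (consSeq 0 z)) 0, hrule (consSeq 0 z) 0] at e2
    have e3 : (0 : ZMod 2) = (0 + c z) + c' (shiftMap (h (consSeq 0 z))) := e2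
    rw [← hcomm (consSeq 0 z)] at e3
    have e4 : (0 : ZMod 2) = (0 + c z) + c' (h z) := e3
    exact (by decide : ∀ a b : ZMod 2, (0 : ZMod 2) = (0 + a) + b → a = b) _ _ e4
  have hK := Nat.find_spec hNc
  by_cases hK0 : Nat.find hNc = 0
  · -- c is constant
    have hconst : ∀ z z' : Sigma2Plus, c z = c z' := by
      intro z z'
      apply hK
      intro i hi
      omega
    rcases (by decide : ∀ a : ZMod 2, a = 0 ∨ a = 1) (c fun _ => 0) with h0 | h1
    · left
      intro x
      funext n
      rw [hrule x n, hconst _ (fun _ => 0), h0, add_zero]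
    · right
      intro x n
      rw [hrule x n, hconst _ (fun _ => 0), h1]
      exact (by decide : ∀ a : ZMod 2, a + 1 = 1 - a) _
  · exfalso
    have hL := Nat.find_spec hNc'
    have hL0 : Nat.find hNc' ≠ 0 := by
      intro hL0'
      apply hK0
      have hdep : DependsOnFirst c 0 := by
        intro z z' _
        rw [spade z, spade z']
        apply hL
        intro i hi
        omega
      have hfind : Nat.find hNc ≤ 0 := Nat.find_le hdep
      omega
    set K := Nat.find hNc with hKdef
    set L := Nat.find hNc' with hLdef
    obtain ⟨t, s, hts, hcts⟩ := sensitivity c hNc hK0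
    obtain ⟨u, u', huu, hcuu⟩ := sensitivity c' hNc' hL0
    rw [← hKdef] at hts
    rw [← hLdef] at huu
    have hK1 : 1 ≤ K := by omega
    have hL1 : 1 ≤ L := by omega
    -- the two steered points
    set z : Sigma2Plus := steer c u t L with hz
    set z' : Sigma2Plus := steer c u s L with hz'
    -- they agree below L
    have G0 : ∀ m i, L - i ≤ m → i < L → z i = z' i := by
      intro m
      induction m with
      | zero => intro i h1 h2; omega
      | succ m ih =>
        intro i h1 h2
        by_cases hieq : i = L - 1
        · rw [hz, hz', hieq, steer_top c u t L (by omega), steer_top c u s L (by omega)]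
        · have hilt : i < L - 1 := by omega
          rw [hz, hz', steer_lt c u t L i hilt, steer_lt c u s L i hilt]
          congr 1
          apply hK
          intro j hj
          by_cases hp : L ≤ j + i + 1
          · rw [steer_ge c u t L _ hp, steer_ge c u s L _ hp]
            apply hts
            omega
          · have := ih (j + i + 1) (by omega) (by omega)
            rw [hz, hz'] at this
            exact this
    -- same c-value
    have G2 : c z = c z' := by
      apply hK
      intro i hi
      by_cases hp : L ≤ i
      · rw [hz, hz', steer_ge c u t L _ hp, steer_ge c u s L _ hp]
        apply hts
        omega
      · exact G0 L i (by omega) (by omega)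
    -- images agree with u below L-1
    have G3 : ∀ i, i < L - 1 → h z i = u i := by
      intro i hi
      rw [hrule z i]
      have hzi : z i = u i + c (fun j => z (j + i + 1)) := by
        rw [hz]; exact steer_lt c u t L i hi
      rw [hzi]
      exact (by decide : ∀ a b : ZMod 2, a + b + b = a) _ _
    have G3' : ∀ i, i < L - 1 → h z' i = u i := by
      intro i hi
      rw [hrule z' i]
      have hzi : z' i = u i + c (fun j => z' (j + i + 1)) := by
        rw [hz']; exact steer_lt c u s L i hi
      rw [hzi]
      exact (by decide : ∀ a b : ZMod 2, a + b + b = a) _ _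
    -- value at L-1
    have hwin : (fun j => z (j + (L - 1) + 1)) = t := by
      funext j
      rw [hz]
      have hj : j + (L - 1) + 1 = j + L := by omega
      rw [hj, steer_ge c u t L _ (by omega)]
      congr 1
      omega
    have hwin' : (fun j => z' (j + (L - 1) + 1)) = s := by
      funext j
      rw [hz']
      have hj : j + (L - 1) + 1 = j + L := by omega
      rw [hj, steer_ge c u s L _ (by omega)]
      congr 1
      omega
    have G4 : h z (L - 1) = c t := by
      rw [hrule z (L - 1), hwin]
      have : z (L - 1) = 0 := by rw [hz]; exact steer_top c u t L (by omega)
      rw [this, zero_add]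
    have G4' : h z' (L - 1) = c s := by
      rw [hrule z' (L - 1), hwin']
      have : z' (L - 1) = 0 := by rw [hz']; exact steer_top c u s L (by omega)
      rw [this, zero_add]
    -- c' separates the images
    have hdis : h z (L - 1) ≠ h z' (L - 1) := by
      rw [G4, G4']; exact hcts
    have hud : u (L - 1) ≠ u' (L - 1) := by
      intro he
      apply hcuu
      have : u = u' := by
        funext i
        by_cases hieq : i = L - 1
        · rw [hieq]; exact he
        · exact huu i hieq
      rw [this]
    have G6 : c' (h z) ≠ c' (h z') := by
      rcases (by decide : ∀ a b x y : ZMod 2,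
          a ≠ b → x ≠ y → (a = x ∧ b = y) ∨ (a = y ∧ b = x)) _ _ _ _ hdis hud with
        ⟨h1, h2⟩ | ⟨h1, h2⟩
      · have e1 : c' (h z) = c' u := by
          apply hL
          intro i hi
          by_cases hieq : i = L - 1
          · rw [hieq]; exact h1
          · exact (G3 i (by omega)).trans rfl
        have e2 : c' (h z') = c' u' := by
          apply hL
          intro i hi
          by_cases hieq : i = L - 1
          · rw [hieq]; exact h2
          · rw [G3' i (by omega)]
            exact huu i hieq
        rw [e1, e2]; exact hcuu
      · have e1 : c' (h z) = c' u' := by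
          apply hL
          intro i hi
          by_cases hieq : i = L - 1
          · rw [hieq]; exact h1
          · rw [G3 i (by omega)]
            exact huu i hieq
        have e2 : c' (h z') = c' u := by
          apply hL
          intro i hi
          by_cases hieq : i = L - 1
          · rw [hieq]; exact h2
          · exact (G3' i (by omega)).trans rfl
        rw [e1, e2]; exact hcuu.symm
    apply G6
    rw [← spade z, ← spade z']
    exact G2

/-- The flip homeomorphism. -/
def flipHomeo : Sigma2Plus ≃ₜ Sigma2Plus where
  toFun := fun x n => 1 + x n
  invFun := fun x n => 1 + x n
  left_inv := fun x => funext fun n => (by decide : ∀ a : ZMod 2, 1 + (1 + a) = a) _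
  right_inv := fun x => funext fun n => (by decide : ∀ a : ZMod 2, 1 + (1 + a) = a) _
  continuous_toFun := by
    exact continuous_pi fun n =>
      (continuous_of_discreteTopology (f := fun a : ZMod 2 => 1 + a)).comp
        (continuous_apply n)
  continuous_invFun := by
    exact continuous_pi fun n =>
      (continuous_of_discreteTopology (f := fun a : ZMod 2 => 1 + a)).comp
        (continuous_apply n)

/-- Every automorphism of the one-sided full 2-shift is the identity or the symbol
interchange `x ↦ (1 − x_n)ₙ`; in particular, the automorphism group of the one-sided
full 2-shift has exactly two elements (so it is cyclic of order two). -/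
theorem one_sided_shift_automorphisms :
    (∀ h : Sigma2Plus ≃ₜ Sigma2Plus, (∀ x, h (shiftMap x) = shiftMap (h x)) →
      (∀ x, h x = x) ∨ (∀ x n, h x n = 1 - x n)) ∧
    Nat.card {h : Sigma2Plus ≃ₜ Sigma2Plus // ∀ x, h (shiftMap x) = shiftMap (h x)} = 2 := by
  constructor
  · exact part_one
  · rw [Nat.card_eq_two_iff]
    refine ⟨⟨Homeomorph.refl _, fun x => rfl⟩, ⟨flipHomeo, fun x => rfl⟩, ?_, ?_⟩
    · intro hEq
      have h2 := congrArg (fun e : {h : Sigma2Plus ≃ₜ Sigma2Plus //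
          ∀ x, h (shiftMap x) = shiftMap (h x)} => e.val (fun _ => (0 : ZMod 2)) 0) hEq
      simp only [Homeomorph.refl_apply, id_eq] at h2
      have h3 : (0 : ZMod 2) = 1 + 0 := h2
      rw [add_zero] at h3
      exact absurd h3 (by decide)
    · apply Set.eq_univ_iff_forall.mpr
      rintro ⟨h, hc⟩
      rcases part_one h hc with hid | hfl
      · left
        apply Subtype.ext
        exact (Homeomorph.ext fun x => by rw [hid x]; rfl).symm
      · right
        apply Subtype.ext
        refine (Homeomorph.ext fun x => ?_).symm
        funext n
        rw [hfl x n]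
        exact ((by decide : ∀ a : ZMod 2, 1 - a = 1 + a) _).symm
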